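/- Let $X_1, X_2, \dots$ be i.i.d. Bernoulli($p$) random variables with $p \le 1/2$, and let $S_n = \sum_{i=1}^n X_i - np$. Then the refined Azuma inequality applied to the martingale $S_n$ yields, for every $\alpha \ge 0$, $\Pr(S_n \ge n\alpha) \le \exp(-n\, D(\alpha + p \,\|\, p))$, recovering the method-of-types upper bound $\Pr\left(\frac{1}{n}\sum_{i=1}^n X_i \ge r\right) \le e^{-nD(r\|p)}$ for $r \ge p$. -/

import Mathlib

open MeasureTheory ProbabilityTheory

/-- Binary relative entropy (KL divergence between Bernoulli(p) and Bernoulli(q)). -/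
noncomputable def binKL (p q : ℝ) : ℝ :=
  p * Real.log (p / q) + (1 - p) * Real.log ((1 - p) / (1 - q))

lemma bern_aux {Ω : Type*} [MeasurableSpace Ω] (μ : Measure Ω) [IsProbabilityMeasure μ]
    (Y : Ω → ℝ) (p t : ℝ) (hmeas : Measurable Y)
    (hv : ∀ᵐ ω ∂μ, Y ω = 0 ∨ Y ω = 1) (hp1 : μ {ω | Y ω = 1} = ENNReal.ofReal p)
    (hp0 : 0 ≤ p) :
    Integrable (fun ω => Real.exp (t * Y ω)) μ ∧ mgf Y μ t = 1 - p + p * Real.exp t := by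
  have hset : MeasurableSet {ω | Y ω = 1} := hmeas (measurableSet_singleton 1)
  have hYind : Y =ᵐ[μ] Set.indicator {ω | Y ω = 1} (fun _ => (1 : ℝ)) := by
    filter_upwards [hv] with ω h
    rcases h with h | h
    · have : ω ∉ {ω | Y ω = 1} := by simp [Set.mem_setOf_eq, h]
      simp [Set.indicator_of_notMem this, h]
    · have : ω ∈ {ω | Y ω = 1} := h
      simp [Set.indicator_of_mem this, h]
  have hYint : Integrable Y μ := by
    refine (Integrable.congr ?_ hYind.symm)
    exact (integrable_const (1 : ℝ)).indicator hset
  have hYmean : ∫ ω, Y ω ∂μ = p := by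
    rw [integral_congr_ae hYind, integral_indicator_const (1 : ℝ) hset, measureReal_def, hp1, smul_eq_mul,
      mul_one, ENNReal.toReal_ofReal hp0]
  have hexp_eq : (fun ω => Real.exp (t * Y ω)) =ᵐ[μ]
      fun ω => 1 + (Real.exp t - 1) * Y ω := by
    filter_upwards [hv] with ω h
    rcases h with h | h <;> simp [h]
  have hint2 : Integrable (fun ω => 1 + (Real.exp t - 1) * Y ω) μ :=
    (integrable_const 1).add (hYint.const_mul _)
  have hint : Integrable (fun ω => Real.exp (t * Y ω)) μ := hint2.congr hexp_eq.symm
  refine ⟨hint, ?_⟩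
  rw [mgf, integral_congr_ae hexp_eq, integral_add (integrable_const 1) (hYint.const_mul _),
    integral_const_mul, hYmean]
  simp; ring

/-- for i.i.d. Bernoulli(p) random variables with `p ≤ 1/2`, the refined
Azuma inequality applied to the centered partial sums recovers the method-of-types
upper bound `exp(-n D(α + p ‖ p))`. -/
theorem stmt_15 {Ω : Type*} [MeasurableSpace Ω] (μ : Measure Ω) [IsProbabilityMeasure μ]
    (X : ℕ → Ω → ℝ) (p : ℝ) (hp0 : 0 ≤ p) (hp : p ≤ 1 / 2)
    (hmeas : ∀ i, Measurable (X i))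
    (hindep : iIndepFun X μ)
    (hvals : ∀ i, ∀ᵐ ω ∂μ, X i ω = 0 ∨ X i ω = 1)
    (hp1 : ∀ i, μ {ω | X i ω = 1} = ENNReal.ofReal p)
    (n : ℕ) (α : ℝ) (hα : 0 ≤ α) :
    (μ {ω | (n : ℝ) * α ≤ (∑ i ∈ Finset.range n, X i ω) - n * p}).toReal ≤
      Real.exp (-(n : ℝ) * binKL (α + p) p) := by
  set r : ℝ := α + p with hr_def
  set E : Set Ω := {ω | (n : ℝ) * α ≤ (∑ i ∈ Finset.range n, X i ω) - n * p} with hE_def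
  have hle1 : (μ E).toReal ≤ 1 := by
    have h : μ E ≤ 1 := prob_le_one
    simpa using ENNReal.toReal_mono ENNReal.one_ne_top h
  -- the Chernoff bound for all t ≥ 0
  have key : ∀ t : ℝ, 0 ≤ t →
      (μ E).toReal ≤ Real.exp (-t * ((n : ℝ) * r)) * (1 - p + p * Real.exp t) ^ n := by
    intro t ht
    have hint : ∀ i ∈ Finset.range n, Integrable (fun ω => Real.exp (t * X i ω)) μ :=
      fun i _ => (bern_aux μ (X i) p t (hmeas i) (hvals i) (hp1 i) hp0).1
    have hintS : Integrable (fun ω => Real.exp (t * (∑ i ∈ Finset.range n, X i) ω)) μ :=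
      hindep.integrable_exp_mul_sum hmeas hint
    have hE_eq : E = {ω | (n : ℝ) * r ≤ (∑ i ∈ Finset.range n, X i) ω} := by
      ext ω
      simp only [hE_def, Set.mem_setOf_eq, Finset.sum_apply, hr_def]
      constructor <;> intro h <;> nlinarith
    have hcher := measure_ge_le_exp_mul_mgf (X := ∑ i ∈ Finset.range n, X i)
      ((n : ℝ) * r) ht hintS
    rw [hE_eq]
    refine hcher.trans_eq ?_
    congr 1
    rw [hindep.mgf_sum hmeas]
    rw [Finset.prod_congr rfl
      (fun i _ => (bern_aux μ (X i) p t (hmeas i) (hvals i) (hp1 i) hp0).2)]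
    simp
  rcases Nat.eq_zero_or_pos n with hn | hn
  · subst hn
    simpa using hle1
  rcases eq_or_lt_of_le hα with hα0 | hα0
  · -- α = 0 : bound is 1
    have hbin : binKL r p = 0 := by
      rw [hr_def, ← hα0, zero_add]
      unfold binKL
      rcases eq_or_lt_of_le hp0 with h0 | h0
      · rw [← h0]; simp
      · rw [div_self h0.ne', div_self (by linarith : (1 : ℝ) - p ≠ 0)]
        simp
    rw [hbin]
    simpa using hle1
  have hnpos : (0 : ℝ) < n := by exact_mod_cast hn
  rcases eq_or_lt_of_le hp0 with hp0' | hp0'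
  · -- p = 0 : event is null
    have hnull : μ E = 0 := by
      have h0 : ∀ i, ∀ᵐ ω ∂μ, X i ω = 0 := by
        intro i
        have hne : ∀ᵐ ω ∂μ, X i ω ≠ 1 := by
          rw [ae_iff]
          simpa [← hp0'] using hp1 i
        filter_upwards [hvals i, hne] with ω h hne'
        tauto
      have hall : ∀ᵐ ω ∂μ, ∀ i, X i ω = 0 := ae_all_iff.2 h0
      rw [measure_eq_zero_iff_ae_notMem]
      filter_upwards [hall] with ω h
      simp only [hE_def, Set.mem_setOf_eq, not_le]
      have hsum : (∑ i ∈ Finset.range n, X i ω) = 0 :=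
        Finset.sum_eq_zero fun i _ => h i
      rw [hsum, ← hp0']
      nlinarith
    rw [hnull]
    positivity
  have h1p : 0 < 1 - p := by linarith
  have hrp : p < r := by rw [hr_def]; linarith
  have hrpos : 0 < r := lt_of_le_of_lt hp0 hrp
  rcases lt_trichotomy r 1 with hr1 | hr1 | hr1
  · -- main case: p < r < 1
    have h1r : 0 < 1 - r := by linarith
    set t₀ : ℝ := Real.log (r * (1 - p) / ((1 - r) * p)) with ht₀_def
    have hargpos : 0 < r * (1 - p) / ((1 - r) * p) := by positivity
    have harg1 : 1 ≤ r * (1 - p) / ((1 - r) * p) := by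
      rw [one_le_div (by positivity)]
      nlinarith
    have ht₀ : 0 ≤ t₀ := Real.log_nonneg harg1
    have hexpt₀ : Real.exp t₀ = r * (1 - p) / ((1 - r) * p) := Real.exp_log hargpos
    have hbase : 1 - p + p * Real.exp t₀ = (1 - p) / (1 - r) := by
      rw [hexpt₀]; field_simp; ring
    refine (key t₀ ht₀).trans_eq ?_
    rw [hbase]
    have hdivpos : 0 < (1 - p) / (1 - r) := by positivity
    rw [show ((1 - p) / (1 - r)) ^ n = Real.exp ((n : ℝ) * Real.log ((1 - p) / (1 - r))) by
      rw [mul_comm, Real.exp_mul, Real.exp_log hdivpos, Real.rpow_natCast],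
      ← Real.exp_add]
    congr 1
    have ht₀' : t₀ = Real.log r + Real.log (1 - p) - (Real.log (1 - r) + Real.log p) := by
      rw [ht₀_def, Real.log_div (by positivity) (by positivity),
        Real.log_mul hrpos.ne' h1p.ne', Real.log_mul h1r.ne' hp0'.ne']
    have hL : Real.log ((1 - p) / (1 - r)) = Real.log (1 - p) - Real.log (1 - r) :=
      Real.log_div h1p.ne' h1r.ne'
    have hbinKL : binKL r p = r * (Real.log r - Real.log p)
        + (1 - r) * (Real.log (1 - r) - Real.log (1 - p)) := by
      unfold binKL
      rw [Real.log_div hrpos.ne' hp0'.ne', Real.log_div h1r.ne' h1p.ne']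
    rw [ht₀', hL, hbinKL]
    ring
  · -- r = 1 : limit argument
    have hRHS : Real.exp (-(n : ℝ) * binKL r p) = p ^ n := by
      have : binKL r p = -Real.log p := by
        unfold binKL
        rw [hr1]
        simp [Real.log_inv, one_div]
      rw [this]
      rw [show -(n : ℝ) * -Real.log p = (n : ℝ) * Real.log p by ring,
        mul_comm, Real.exp_mul, Real.exp_log hp0', Real.rpow_natCast]
    rw [hRHS]
    have hlim : Filter.Tendsto (fun t : ℝ => ((1 - p) * Real.exp (-t) + p) ^ n)
        Filter.atTop (nhds (p ^ n)) := by
      have h1 : Filter.Tendsto (fun t : ℝ => Real.exp (-t)) Filter.atTop (nhds 0) :=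
        Real.tendsto_exp_atBot.comp Filter.tendsto_neg_atTop_atBot
      have h2 : Filter.Tendsto (fun t : ℝ => (1 - p) * Real.exp (-t) + p)
          Filter.atTop (nhds p) := by
        have := (h1.const_mul (1 - p)).add_const p
        simpa using this
      exact h2.pow n
    refine ge_of_tendsto hlim ?_
    filter_upwards [Filter.eventually_ge_atTop (0 : ℝ)] with t ht
    refine (key t ht).trans_eq ?_
    rw [show -t * ((n : ℝ) * r) = (-t) * n by rw [hr1]; ring, Real.exp_mul,
      Real.rpow_natCast, ← mul_pow]
    congr 1
    rw [Real.exp_neg]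
    field_simp
  · -- r > 1 : event is null
    have hnull : μ E = 0 := by
      have hall : ∀ᵐ ω ∂μ, ∀ i, X i ω = 0 ∨ X i ω = 1 := ae_all_iff.2 hvals
      rw [measure_eq_zero_iff_ae_notMem]
      filter_upwards [hall] with ω h
      simp only [hE_def, Set.mem_setOf_eq, not_le]
      have hsum : (∑ i ∈ Finset.range n, X i ω) ≤ n := by
        calc (∑ i ∈ Finset.range n, X i ω) ≤ ∑ i ∈ Finset.range n, 1 := by
              refine Finset.sum_le_sum fun i _ => ?_
              rcases h i with h' | h' <;> rw [h'] <;> norm_num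
          _ = n := by simp
      have : (1 : ℝ) - p < α := by rw [hr_def] at hr1; linarith
      nlinarith
    rw [hnull]
    positivity
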